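/- Fix k ≥ 2, let T_1, ..., T_{2k-1} be trees each with at least two vertices, let G be the Cartesian product T_1 □ T_2 □ ⋯ □ T_{2k-1}, and let t ≥ 2k. Then the fully active cop number of the t-blowup G^{(t)} is strictly greater than 2k−1 (hence equals 2k, since acop(G^{(t)}) ≤ 2·cop(G^{(t)}) = 2k). -/

import Mathlib

open SimpleGraph

universe u v

variable {V : Type u}

/-- A configuration in the game of Cops and Robbers with `n` cops:
the positions of the cops together with the position of the robber. -/
abbrev CRConfig (V : Type u) (n : ℕ) : Type u := (Fin n → V) × V

/-- A strategy for `n` cops in the *fully active* game on `G`: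
initial positions, together with a move function (which may depend on the
full history of the play and on the current configuration) under which
every cop moves to an adjacent vertex on every turn. -/
structure ActiveCopStrategy (G : SimpleGraph V) (n : ℕ) where
  init : Fin n → V
  move : List (CRConfig V n) → CRConfig V n → Fin n → V
  move_adj : ∀ h c i, G.Adj (c.1 i) (move h c i)

/-- A strategy for the robber in the *fully active* game on `G`:
an initial position (chosen knowing the cops' initial positions),
together with a move function (which may depend on the full history and on
the current configuration, whose first component records the cops' newly
chosen positions) under which the robber moves to an adjacent vertex on
every turn. -/
structure ActiveRobberStrategy (G : SimpleGraph V) (n : ℕ) where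
  init : (Fin n → V) → V
  move : List (CRConfig V n) → CRConfig V n → V
  move_adj : ∀ h c, G.Adj c.2 (move h c)

/-- A strategy for `n` cops in the *passive* (classical) game on `G`:
on her turn, each cop either moves to an adjacent vertex or stays put. -/
structure PassiveCopStrategy (G : SimpleGraph V) (n : ℕ) where
  init : Fin n → V
  move : List (CRConfig V n) → CRConfig V n → Fin n → V
  move_adj : ∀ h c i, G.Adj (c.1 i) (move h c i) ∨ move h c i = c.1 i

/-- A strategy for the robber in the *passive* (classical) game on `G`:
on his turn the robber either moves to an adjacent vertex or stays put. -/
structure PassiveRobberStrategy (G : SimpleGraph V) (n : ℕ) where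
  init : (Fin n → V) → V
  move : List (CRConfig V n) → CRConfig V n → V
  move_adj : ∀ h c, G.Adj c.2 (move h c) ∨ move h c = c.2

/-- The play determined by (the data of) a cop strategy and a robber strategy:
`crPlay n cinit rinit cmove rmove t` is the pair consisting of the history of
configurations strictly before round `t` and the configuration after round `t`
(a round consists of a cop move followed by a robber move; round `0` is the
initial placement, cops first, then the robber). -/
def crPlay (n : ℕ) (cinit : Fin n → V) (rinit : (Fin n → V) → V)
    (cmove : List (CRConfig V n) → CRConfig V n → Fin n → V)
    (rmove : List (CRConfig V n) → CRConfig V n → V) :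
    ℕ → List (CRConfig V n) × CRConfig V n
  | 0 => ([], (cinit, rinit cinit))
  | t + 1 =>
      let p := crPlay n cinit rinit cmove rmove t
      let c' := cmove p.1 p.2
      (p.1 ++ [p.2], (c', rmove p.1 (c', p.2.2)))

/-- The cops capture the robber in the given play: at some point of the play
(either right after a robber move, or right after a cop move) some cop
occupies the robber's vertex. -/
def crCaptures (n : ℕ) (cinit : Fin n → V) (rinit : (Fin n → V) → V)
    (cmove : List (CRConfig V n) → CRConfig V n → Fin n → V)
    (rmove : List (CRConfig V n) → CRConfig V n → V) : Prop :=
  ∃ t : ℕ,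
    (∃ i, (crPlay n cinit rinit cmove rmove t).2.1 i
        = (crPlay n cinit rinit cmove rmove t).2.2) ∨
    (∃ i, cmove (crPlay n cinit rinit cmove rmove t).1
            (crPlay n cinit rinit cmove rmove t).2 i
        = (crPlay n cinit rinit cmove rmove t).2.2)

/-- In the fully active game, the given cop strategy captures the robber
playing the given strategy. -/
def ActiveCapture {G : SimpleGraph V} {n : ℕ} (cs : ActiveCopStrategy G n)
    (rs : ActiveRobberStrategy G n) : Prop :=
  crCaptures n cs.init rs.init cs.move rs.move

/-- In the passive game, the given cop strategy captures the robber
playing the given strategy. -/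
def PassiveCapture {G : SimpleGraph V} {n : ℕ} (cs : PassiveCopStrategy G n)
    (rs : PassiveRobberStrategy G n) : Prop :=
  crCaptures n cs.init rs.init cs.move rs.move

/-- `n` cops have a winning strategy in the fully active game on `G`. -/
def ActiveCopsWin (G : SimpleGraph V) (n : ℕ) : Prop :=
  ∃ cs : ActiveCopStrategy G n, ∀ rs : ActiveRobberStrategy G n, ActiveCapture cs rs

/-- `n` cops have a winning strategy in the passive (classical) game on `G`. -/
def PassiveCopsWin (G : SimpleGraph V) (n : ℕ) : Prop :=
  ∃ cs : PassiveCopStrategy G n, ∀ rs : PassiveRobberStrategy G n, PassiveCapture cs rs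

/-- The fully active cop number of `G`. -/
noncomputable def acop (G : SimpleGraph V) : ℕ := sInf {n | ActiveCopsWin G n}

/-- The (classical, passive) cop number of `G`. -/
noncomputable def copNumber (G : SimpleGraph V) : ℕ := sInf {n | PassiveCopsWin G n}
/-- The Cartesian (box) product of a family of graphs: two tuples are adjacent
iff they differ in exactly one coordinate, in which they are adjacent in the
corresponding factor. -/
def piBox {ι : Type v} {W : ι → Type u} (G : ∀ i, SimpleGraph (W i)) :
    SimpleGraph (∀ i, W i) where
  Adj x y := ∃ i, (G i).Adj (x i) (y i) ∧ ∀ j, j ≠ i → x j = y j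
  symm := ⟨by
    rintro x y ⟨i, hadj, heq⟩
    exact ⟨i, hadj.symm, fun j hj => (heq j hj).symm⟩⟩
  loopless := ⟨by
    rintro x ⟨i, hadj, -⟩
    exact (G i).irrefl hadj⟩
/-- The `t`-blowup of `G`: each vertex is replaced by an independent set of
`t` copies, and each edge by a complete bipartite graph between the
corresponding sets. -/
def blowup {W : Type u} (G : SimpleGraph W) (t : ℕ) : SimpleGraph (W × Fin t) where
  Adj a b := G.Adj a.1 b.1
  symm := ⟨fun _ _ h => G.adj_symm h⟩
  loopless := ⟨fun a h => G.irrefl h⟩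

open SimpleGraph

variable {V : Type*} {G : SimpleGraph V}

/-- In a tree, every path realizes the distance. -/
lemma tree_path_length (ha : G.IsAcyclic) {x y : V} (p : G.Walk x y) (hp : p.IsPath) :
    p.length = G.dist x y := by
  classical
  have hreach : G.Reachable x y := ⟨p⟩
  obtain ⟨q, hq⟩ := hreach.exists_walk_length_eq_dist
  have hq' : q.bypass.length ≤ G.dist x y := hq ▸ q.length_bypass_le
  have h1 : G.dist x y ≤ q.bypass.length := SimpleGraph.dist_le _
  have hlen : q.bypass.length = G.dist x y := le_antisymm hq' h1
  have := ha.path_unique ⟨p, hp⟩ ⟨q.bypass, q.bypass_isPath⟩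
  have : p = q.bypass := congrArg Subtype.val this
  rw [this, hlen]

/-- Adjacent vertices in a connected tree have distances to any vertex differing by exactly 1. -/
lemma tree_adj_dist (hc : G.Connected) (ha : G.IsAcyclic) {u v : V} (h : G.Adj u v) (x : V) :
    G.dist x v = G.dist x u + 1 ∨ G.dist x u = G.dist x v + 1 := by
  classical
  obtain ⟨p, hp⟩ := hc.exists_walk_length_eq_dist x u
  have hpath : p.IsPath := p.isPath_of_length_eq_dist hp
  by_cases hv : v ∈ p.support
  · right
    -- dropUntil v : path from v to u must be the edge
    have hdrop : (p.dropUntil v hv).IsPath := hpath.dropUntil hv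
    have hdl : (p.dropUntil v hv).length = G.dist v u := tree_path_length ha _ hdrop
    have hvu : G.dist v u = 1 := by
      rw [SimpleGraph.dist_comm, SimpleGraph.dist_eq_one_iff_adj]; exact h
    have htake : (p.takeUntil v hv).IsPath := hpath.takeUntil hv
    have htl : (p.takeUntil v hv).length = G.dist x v := tree_path_length ha _ htake
    have hsum : (p.takeUntil v hv).length + (p.dropUntil v hv).length = p.length := by
      rw [← SimpleGraph.Walk.length_append, SimpleGraph.Walk.take_spec]
    omega
  · left
    have hcon : (p.concat h).IsPath := by
      rw [← SimpleGraph.Walk.isPath_reverse_iff, SimpleGraph.Walk.reverse_concat]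
      rw [SimpleGraph.Walk.cons_isPath_iff]
      refine ⟨(SimpleGraph.Walk.isPath_reverse_iff p).mpr hpath, ?_⟩
      rw [SimpleGraph.Walk.support_reverse]
      simpa using hv
    have := tree_path_length ha _ hcon
    rw [SimpleGraph.Walk.length_concat] at this
    omega

/-- Every vertex of a connected nontrivial graph has a neighbor. -/
lemma exists_adj (hc : G.Connected) [Nontrivial V] (v : V) : ∃ w, G.Adj v w := by
  obtain ⟨u, hu⟩ := exists_ne v
  obtain ⟨p, _⟩ := hc.exists_walk_length_eq_dist v u
  cases p with
  | nil => exact absurd rfl hu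
  | cons h q => exact ⟨_, h⟩

/-- One can always take a step decreasing the distance. -/
lemma exists_toward (hc : G.Connected) {c r : V} (h : G.dist c r ≠ 0) :
    ∃ c', G.Adj c c' ∧ G.dist c' r + 1 = G.dist c r := by
  obtain ⟨p, hp⟩ := hc.exists_walk_length_eq_dist c r
  cases p with
  | nil => exact absurd SimpleGraph.dist_self h
  | @cons _ c' _ hadj q =>
    refine ⟨c', hadj, ?_⟩
    have h1 : G.dist c' r ≤ q.length := SimpleGraph.dist_le q
    have h2 : G.dist c r ≤ 1 + G.dist c' r := by
      calc G.dist c r ≤ G.dist c c' + G.dist c' r := hc.dist_triangle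
        _ ≤ 1 + G.dist c' r := by
            have : G.dist c c' ≤ 1 := by
              have := SimpleGraph.dist_le (SimpleGraph.Walk.cons hadj SimpleGraph.Walk.nil)
              simpa using this
            omega
    simp only [SimpleGraph.Walk.length_cons] at hp
    omega

/-- A vertex on a path between `a` and `b` in a tree splits the distance. -/
lemma tree_dist_add_of_mem (ha : G.IsAcyclic) {a b m : V} (p : G.Walk a b) (hp : p.IsPath)
    (hm : m ∈ p.support) : G.dist a m + G.dist m b = G.dist a b := by
  classical
  have h1 : (p.takeUntil m hm).length = G.dist a m := tree_path_length ha _ (hp.takeUntil hm)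
  have h2 : (p.dropUntil m hm).length = G.dist m b := tree_path_length ha _ (hp.dropUntil hm)
  have h3 : (p.takeUntil m hm).length + (p.dropUntil m hm).length = p.length := by
    rw [← SimpleGraph.Walk.length_append, SimpleGraph.Walk.take_spec]
  have h4 : p.length = G.dist a b := tree_path_length ha p hp
  omega

/-- Conversely: distance additivity puts `m` on the (unique) path. -/
lemma tree_mem_of_dist_add (hc : G.Connected) (ha : G.IsAcyclic) {a b m : V}
    (h : G.dist a m + G.dist m b = G.dist a b) (p : G.Walk a b) (hp : p.IsPath) :
    m ∈ p.support := by
  classical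
  obtain ⟨q1, hq1⟩ := hc.exists_walk_length_eq_dist a m
  obtain ⟨q2, hq2⟩ := hc.exists_walk_length_eq_dist m b
  have hlen : (q1.append q2).length = G.dist a b := by
    rw [SimpleGraph.Walk.length_append]; omega
  have hpath : (q1.append q2).IsPath := (q1.append q2).isPath_of_length_eq_dist hlen
  have hmem : m ∈ (q1.append q2).support := by
    rw [SimpleGraph.Walk.mem_support_append_iff]
    left; exact q1.end_mem_support
  have := ha.path_unique ⟨p, hp⟩ ⟨q1.append q2, hpath⟩
  have hpq : p = q1.append q2 := congrArg Subtype.val this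
  rw [hpq]; exact hmem

/-- Key tree lemma: moving the observer one step along the geodesic toward `r`
(but not onto `r`) preserves the "behind" relation. -/
lemma tree_between_step (hc : G.Connected) (ha : G.IsAcyclic) {c c' r x : V}
    (hadj : G.Adj c c') (h1 : G.dist c' r + 1 = G.dist c r) (h2 : G.dist c' r ≠ 0)
    (hx : G.dist c' x = G.dist c' r + G.dist r x) :
    G.dist c x = G.dist c r + G.dist r x := by
  classical
  rcases tree_adj_dist hc ha hadj x with hgood | hbad
  · -- dist x c' = dist x c + 1 : bad case
    exfalso
    have hbtw : G.dist c' c + G.dist c x = G.dist c' x := by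
      have hcc' : G.dist c' c = 1 := by
        rw [SimpleGraph.dist_eq_one_iff_adj]; exact hadj.symm
      rw [show G.dist x c = G.dist c x from SimpleGraph.dist_comm,
        show G.dist x c' = G.dist c' x from SimpleGraph.dist_comm] at hgood
      omega
    obtain ⟨p, hp⟩ := hc.exists_walk_length_eq_dist c' x
    have hpath : p.IsPath := p.isPath_of_length_eq_dist hp
    have hcmem : c ∈ p.support := tree_mem_of_dist_add hc ha hbtw p hpath
    have hrmem : r ∈ p.support := tree_mem_of_dist_add hc ha hx.symm p hpath
    -- r is on the prefix (up to c) or the suffix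
    have hsplit : r ∈ (p.takeUntil c hcmem).support ∨ r ∈ (p.dropUntil c hcmem).support := by
      rw [← SimpleGraph.Walk.mem_support_append_iff, SimpleGraph.Walk.take_spec]
      exact hrmem
    rcases hsplit with hr1 | hr2
    · have := tree_dist_add_of_mem ha _ (hpath.takeUntil hcmem) hr1
      -- dist c' r + dist r c = dist c' c = 1
      have hcc' : G.dist c' c = 1 := by
        rw [SimpleGraph.dist_eq_one_iff_adj]; exact hadj.symm
      rw [hcc'] at this
      have hrc : G.dist r c = 0 := by omega
      have : r = c := (hc.dist_eq_zero_iff).mp hrc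
      subst this
      rw [SimpleGraph.dist_comm] at h1
      omega
    · have := tree_dist_add_of_mem ha _ (hpath.dropUntil hcmem) hr2
      -- dist c r + dist r x = dist c x
      omega
  · -- dist x c = dist x c' + 1 : good case
    rw [show G.dist x c = G.dist c x from SimpleGraph.dist_comm,
      show G.dist x c' = G.dist c' x from SimpleGraph.dist_comm] at hbad
    omega

open Classical in
/-- The amount of room the robber at `r` has "behind" him as seen from `c`. -/
noncomputable def treeRoom (G : SimpleGraph V) [Fintype V] (c r : V) : ℕ :=
  Finset.sup Finset.univ
    (fun x => if G.dist c x = G.dist c r + G.dist r x then G.dist r x else 0)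

lemma dist_le_card (hc : G.Connected) [Fintype V] (u v : V) :
    G.dist u v < Fintype.card V := by
  classical
  obtain ⟨p, hp⟩ := hc.exists_walk_length_eq_dist u v
  have h1 : p.bypass.length ≤ p.length := p.length_bypass_le
  have h2 : p.bypass.length < Fintype.card V := p.bypass_isPath.length_lt
  have h3 : G.dist u v ≤ p.bypass.length := SimpleGraph.dist_le _
  omega

lemma treeRoom_le_card [Fintype V] (hc : G.Connected) (c r : V) :
    treeRoom G c r ≤ Fintype.card V := by
  classical
  unfold treeRoom
  apply Finset.sup_le
  intro x _
  split
  · exact le_of_lt (dist_le_card hc r x)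
  · exact Nat.zero_le _

lemma le_treeRoom [Fintype V] {c r x : V}
    (hx : G.dist c x = G.dist c r + G.dist r x) : G.dist r x ≤ treeRoom G c r := by
  unfold treeRoom
  refine Finset.le_sup_of_le (Finset.mem_univ x) ?_
  rw [if_pos hx]

/-- (C1) A robber step away from `c` strictly decreases the room. -/
lemma treeRoom_away [Fintype V] (hc : G.Connected) {c r w : V}
    (hadj : G.Adj r w) (hw : G.dist c w = G.dist c r + 1) :
    treeRoom G c w + 1 ≤ treeRoom G c r := by
  classical
  have hrw : G.dist r w = 1 := by rw [SimpleGraph.dist_eq_one_iff_adj]; exact hadj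
  have hwmem : G.dist c w = G.dist c r + G.dist r w := by omega
  have hR : 1 ≤ treeRoom G c r := le_trans (by omega : 1 ≤ G.dist r w) (le_treeRoom hwmem)
  have hkey : ∀ x : V, G.dist c x = G.dist c w + G.dist w x →
      G.dist w x + 1 ≤ treeRoom G c r := by
    intro x hx
    have htri1 : G.dist r x ≤ G.dist r w + G.dist w x := hc.dist_triangle
    have htri2 : G.dist c x ≤ G.dist c r + G.dist r x := hc.dist_triangle
    have heq : G.dist r x = G.dist w x + 1 := by omega
    have hxbehind : G.dist c x = G.dist c r + G.dist r x := by omega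
    have := le_treeRoom (G := G) hxbehind
    omega
  have : treeRoom G c w < treeRoom G c r := by
    have hbot : (⊥ : ℕ) < treeRoom G c r := by simp only [Nat.bot_eq_zero]; omega
    refine (Finset.sup_lt_iff hbot).mpr ?_
    intro x _
    split
    · next hx => have := hkey x hx; omega
    · omega
  omega

/-- (C2) A cop step toward `r` (not arriving) does not increase the room. -/
lemma treeRoom_toward [Fintype V] (hc : G.Connected) (ha : G.IsAcyclic) {c c' r : V}
    (hadj : G.Adj c c') (h1 : G.dist c' r + 1 = G.dist c r) (h2 : G.dist c' r ≠ 0) :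
    treeRoom G c' r ≤ treeRoom G c r := by
  classical
  unfold treeRoom
  apply Finset.sup_le
  intro x _
  split
  · next hx => exact le_treeRoom (tree_between_step hc ha hadj h1 h2 hx)
  · exact Nat.zero_le _

/-- In a tree, all walks between two vertices have the same parity. -/
lemma tree_walk_parity (hc : G.Connected) (ha : G.IsAcyclic) {x y : V} (p : G.Walk x y) :
    p.length % 2 = G.dist x y % 2 := by
  induction p with
  | nil => simp [SimpleGraph.dist_self]
  | @cons a b c h q ih =>
    have := tree_adj_dist hc ha h c
    rw [show G.dist c b = G.dist b c from SimpleGraph.dist_comm,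
      show G.dist c a = G.dist a c from SimpleGraph.dist_comm] at this
    simp only [SimpleGraph.Walk.length_cons]
    omega

lemma tree_dist_parity (hc : G.Connected) (ha : G.IsAcyclic) (u v b : V) :
    (G.dist u v + (G.dist u b + G.dist b v)) % 2 = 0 := by
  obtain ⟨p, hp⟩ := hc.exists_walk_length_eq_dist u b
  obtain ⟨q, hq⟩ := hc.exists_walk_length_eq_dist b v
  have := tree_walk_parity hc ha (p.append q)
  rw [SimpleGraph.Walk.length_append, hp, hq] at this
  omega

/-! ### Distance in a product of trees -/

section Product

variable {ι : Type v} [Fintype ι] [DecidableEq ι] {W : ι → Type u}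
variable (T : ∀ i, SimpleGraph (W i))

/-- Total distance in the box product: sum of the coordinate distances. -/
noncomputable def DD (c r : ∀ i, W i) : ℕ := ∑ i, (T i).dist (c i) (r i)

lemma DD_comm (c r : ∀ i, W i) : DD T c r = DD T r c := by
  unfold DD
  exact Finset.sum_congr rfl fun i _ => SimpleGraph.dist_comm

lemma DD_split (c r : ∀ i, W i) (i : ι) :
    DD T c r = (T i).dist (c i) (r i) + ∑ j ∈ Finset.univ.erase i, (T j).dist (c j) (r j) := by
  unfold DD
  rw [add_comm, Finset.sum_erase_add _ _ (Finset.mem_univ i)]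

lemma piBox_adj_update {x : ∀ i, W i} {i : ι} {w : W i} (h : (T i).Adj (x i) w) :
    (piBox T).Adj x (Function.update x i w) := by
  refine ⟨i, ?_, fun j hj => ?_⟩
  · rw [Function.update_self]; exact h
  · rw [Function.update_of_ne hj]

/-- Effect of a one-coordinate robber move on a total distance. -/
lemma DD_update (c r : ∀ i, W i) (i : ι) (w : W i) :
    DD T c (Function.update r i w) + (T i).dist (c i) (r i)
      = DD T c r + (T i).dist (c i) w := by
  rw [DD_split T c (Function.update r i w) i, DD_split T c r i, Function.update_self]
  have : ∑ j ∈ Finset.univ.erase i, (T j).dist (c j) (Function.update r i w j)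
      = ∑ j ∈ Finset.univ.erase i, (T j).dist (c j) (r j) := by
    refine Finset.sum_congr rfl fun j hj => ?_
    rw [Function.update_of_ne (Finset.ne_of_mem_erase hj)]
  omega

variable (hconn : ∀ i, (T i).Connected) (hacyclic : ∀ i, (T i).IsAcyclic)

include hconn hacyclic in
/-- A box-product move changes any total distance by exactly one. -/
lemma DD_step {x y : ∀ i, W i} (hxy : (piBox T).Adj x y) (r : ∀ i, W i) :
    DD T r x + 1 = DD T r y ∨ DD T r y + 1 = DD T r x := by
  obtain ⟨i, hadj, heq⟩ := hxy
  have hsum : ∑ j ∈ Finset.univ.erase i, (T j).dist (r j) (x j)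
      = ∑ j ∈ Finset.univ.erase i, (T j).dist (r j) (y j) := by
    refine Finset.sum_congr rfl fun j hj => ?_
    rw [heq j (Finset.ne_of_mem_erase hj)]
  have hco := tree_adj_dist (hconn i) (hacyclic i) hadj (r i)
  rw [DD_split T r x i, DD_split T r y i]
  omega

include hconn in
lemma DD_eq_zero_iff {x r : ∀ i, W i} : DD T x r = 0 ↔ x = r := by
  unfold DD
  rw [Finset.sum_eq_zero_iff]
  constructor
  · intro h
    funext i
    exact ((hconn i).dist_eq_zero_iff).mp (h i (Finset.mem_univ i))
  · rintro rfl i _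
    exact SimpleGraph.dist_self

include hconn in
lemma DD_eq_one_iff_adj {x r : ∀ i, W i} : (piBox T).Adj x r ↔ DD T x r = 1 := by
  constructor
  · rintro ⟨i, hadj, heq⟩
    rw [DD_split T x r i]
    have h1 : (T i).dist (x i) (r i) = 1 := by
      rw [SimpleGraph.dist_eq_one_iff_adj]; exact hadj
    have h2 : ∑ j ∈ Finset.univ.erase i, (T j).dist (x j) (r j) = 0 := by
      refine Finset.sum_eq_zero fun j hj => ?_
      rw [heq j (Finset.ne_of_mem_erase hj)]
      exact SimpleGraph.dist_self
    omega
  · intro h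
    have hex : ∃ i, (T i).dist (x i) (r i) ≠ 0 := by
      by_contra hno
      push_neg at hno
      have : DD T x r = 0 := Finset.sum_eq_zero fun i _ => hno i
      omega
    obtain ⟨i, hi⟩ := hex
    have hsplit := DD_split T x r i
    have hle : (T i).dist (x i) (r i) = 1 ∧
        ∑ j ∈ Finset.univ.erase i, (T j).dist (x j) (r j) = 0 := by
      constructor <;> omega
    refine ⟨i, ?_, fun j hj => ?_⟩
    · rw [← SimpleGraph.dist_eq_one_iff_adj]; exact hle.1
    · have := (Finset.sum_eq_zero_iff).mp hle.2 j (Finset.mem_erase.mpr ⟨hj, Finset.mem_univ j⟩)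
      exact ((hconn j).dist_eq_zero_iff).mp this

end Product
set_option linter.unusedSectionVars false

/-! ### Auxiliary counting lemmas -/

lemma exists_free_copy {n t : ℕ} (hnt : n < t) (f : Fin n → Fin t) :
    ∃ cp : Fin t, ∀ j, f j ≠ cp := by
  classical
  have hcard : (Finset.univ.image f).card < t := by
    have h1 : (Finset.univ.image f).card ≤ Fintype.card (Fin n) := by
      simpa using Finset.card_image_le (s := Finset.univ) (f := f)
    simp only [Fintype.card_fin] at h1 ⊢
    omega
  by_contra hno
  push_neg at hno
  have hsub : Finset.univ ⊆ Finset.univ.image f := by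
    intro cp _
    obtain ⟨j, hj⟩ := hno cp
    exact Finset.mem_image.mpr ⟨j, Finset.mem_univ _, hj⟩
  have := Finset.card_le_card hsub
  simp only [Finset.card_univ, Fintype.card_fin] at this
  omega

/-! ### The lower bound: fewer than 2k cops cannot win -/

section Lower

variable {k t n : ℕ} {W : Fin (2*k-1) → Type u}
variable [∀ i, Fintype (W i)] [∀ i, Nontrivial (W i)]
variable (T : ∀ i, SimpleGraph (W i))
variable (hconn : ∀ i, (T i).Connected) (hacyclic : ∀ i, (T i).IsAcyclic)

/-- The property of a good robber move from configuration `c`. -/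
def RP (c : CRConfig ((∀ i, W i) × Fin t) n) (m : (∀ i, W i) × Fin t) : Prop :=
  (piBox T).Adj c.2.1 m.1 ∧ (∀ j, m ≠ c.1 j) ∧
  (∀ j, DD T ((c.1 j).1) c.2.1 = 2 → DD T ((c.1 j).1) m.1 = 3)

/-- Default legal move (used off the main line). -/
noncomputable def defMove (hk : 2 ≤ k) (v : (∀ i, W i) × Fin t) : (∀ i, W i) × Fin t :=
  let i0 : Fin (2*k-1) := ⟨0, by omega⟩
  (Function.update v.1 i0 (Classical.choose (exists_adj (hconn i0) (v.1 i0))), v.2)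

lemma defMove_adj (hk : 2 ≤ k) (v : (∀ i, W i) × Fin t) :
    (blowup (piBox T) t).Adj v (defMove T hconn hk v) :=
  piBox_adj_update T (Classical.choose_spec (exists_adj (hconn _) (v.1 _)))

open Classical in
/-- The robber's moving strategy. -/
noncomputable def robMove (hk : 2 ≤ k) (_h : List (CRConfig ((∀ i, W i) × Fin t) n))
    (c : CRConfig ((∀ i, W i) × Fin t) n) : (∀ i, W i) × Fin t :=
  if hx : ∃ m, RP T c m then hx.choose else defMove T hconn hk c.2

lemma robMove_adj (hk : 2 ≤ k) (h : List (CRConfig ((∀ i, W i) × Fin t) n))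
    (c : CRConfig ((∀ i, W i) × Fin t) n) :
    (blowup (piBox T) t).Adj c.2 (robMove T hconn hk h c) := by
  unfold robMove
  split
  · next hx => exact hx.choose_spec.1
  · exact defMove_adj T hconn hk c.2

end Lower
section Lower2

variable {k t n : ℕ} {W : Fin (2*k-1) → Type u}
variable [∀ i, Fintype (W i)] [∀ i, Nontrivial (W i)]
variable (T : ∀ i, SimpleGraph (W i))
variable (hconn : ∀ i, (T i).Connected) (hacyclic : ∀ i, (T i).IsAcyclic)

include hconn hacyclic in
lemma DD_parity (b c r : ∀ i, W i) : (DD T c r + (DD T c b + DD T b r)) % 2 = 0 := by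
  classical
  have h : ∀ i ∈ Finset.univ, ((T i).dist (c i) (r i) + ((T i).dist (c i) (b i)
      + (T i).dist (b i) (r i))) % 2 = 0 :=
    fun i _ => tree_dist_parity (hconn i) (hacyclic i) _ _ _
  unfold DD
  rw [← Finset.sum_add_distrib, ← Finset.sum_add_distrib, Finset.sum_nat_mod]
  rw [Finset.sum_congr rfl h]
  simp

/-- A fixed basepoint. -/
noncomputable def bpt : ∀ i, W i := fun i => Classical.arbitrary (W i)

variable (cinit : Fin n → ((∀ i, W i) × Fin t))

open Classical in
/-- The robber's preferred parity. -/
noncomputable def goodP : ℕ :=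
  if 2 * (Finset.univ.filter fun j => DD T ((cinit j).1) (bpt : ∀ i, W i) % 2 = 1).card ≤ n
  then 0 else 1

open Classical in
/-- The set of cops the robber will treat as dangerous. -/
noncomputable def Mset : Finset (Fin n) :=
  Finset.univ.filter fun j => DD T ((cinit j).1) (bpt : ∀ i, W i) % 2 ≠ goodP T cinit

lemma goodP_lt : goodP T cinit < 2 := by
  unfold goodP; split <;> omega

lemma Mset_card (hn : n ≤ 2*k-1) (hk : 2 ≤ k) : (Mset T cinit).card ≤ k - 1 := by
  classical
  unfold Mset goodP
  set S := (Finset.univ.filter fun j => DD T ((cinit j).1) (bpt : ∀ i, W i) % 2 = 1)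
    with hS
  have hsplit := Finset.card_filter_add_card_filter_not
    (s := (Finset.univ : Finset (Fin n)))
    (p := fun j => DD T ((cinit j).1) (bpt : ∀ i, W i) % 2 = 1)
  simp only [Finset.card_univ, Fintype.card_fin] at hsplit
  split
  · next hle =>
    have hcongr : (Finset.univ.filter fun j =>
        DD T ((cinit j).1) (bpt : ∀ i, W i) % 2 ≠ 0)
        = S := by
      refine Finset.filter_congr fun j _ => ?_
      omega
    rw [hcongr]
    rw [hS] at *
    omega
  · next hgt =>
    rw [hS] at hgt
    have hcongr : (Finset.univ.filter fun j =>
        DD T ((cinit j).1) (bpt : ∀ i, W i) % 2 ≠ 1)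
        = Finset.univ.filter fun j =>
          ¬ (DD T ((cinit j).1) (bpt : ∀ i, W i) % 2 = 1) := rfl
    rw [hcongr]
    omega

open Classical in
/-- First stage of the robber's initial base vertex. -/
noncomputable def rb0 : ∀ i, W i := fun i =>
  if h : (i : ℕ) < 2 * (Mset T cinit).card then
    Classical.choose (exists_ne
      ((cinit ((Mset T cinit).equivFin.symm ⟨(i : ℕ)/2, by omega⟩ : {x // x ∈ Mset T cinit}).1).1 i))
  else bpt i

/-- The last coordinate. -/
def lastC (k : ℕ) (hk : 2 ≤ k) : Fin (2*k-1) := ⟨2*k-2, by omega⟩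

open Classical in
/-- The robber's initial base vertex (parity-corrected). -/
noncomputable def rbase (hk : 2 ≤ k) : ∀ i, W i :=
  if (DD T (bpt : ∀ i, W i) (rb0 T cinit)) % 2 = goodP T cinit then rb0 T cinit else
    Function.update (rb0 T cinit) (lastC k hk)
      (Classical.choose (exists_adj (hconn (lastC k hk)) (rb0 T cinit (lastC k hk))))

include hacyclic in
lemma rbase_parity (hk : 2 ≤ k) :
    DD T (bpt : ∀ i, W i) (rbase T hconn cinit hk) % 2 = goodP T cinit := by
  classical
  unfold rbase
  split
  · next h => exact h
  · next h =>
    have hadj := Classical.choose_spec (exists_adj (hconn (lastC k hk)) (rb0 T cinit (lastC k hk)))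
    have hupd := DD_update T (bpt : ∀ i, W i) (rb0 T cinit) (lastC k hk)
      (Classical.choose (exists_adj (hconn (lastC k hk)) (rb0 T cinit (lastC k hk))))
    have hdd := tree_adj_dist (hconn (lastC k hk)) (hacyclic (lastC k hk)) hadj
      ((bpt : ∀ i, W i) (lastC k hk))
    have hlt := goodP_lt T cinit
    omega

include hacyclic in
lemma rbase_dist (hk : 2 ≤ k) (hn : n ≤ 2*k-1) :
    ∀ j ∈ Mset T cinit, 2 ≤ DD T ((cinit j).1) (rbase T hconn cinit hk) := by
  classical
  intro j hj
  have hcard := Mset_card T cinit hn hk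
  set e := (Mset T cinit).equivFin with he
  set s : ℕ := ((e ⟨j, hj⟩ : Fin (Mset T cinit).card) : ℕ) with hs
  have hslt : s < (Mset T cinit).card := by rw [hs]; exact (e ⟨j, hj⟩).isLt
  have hb1 : 2*s < 2*k-1 := by omega
  have hb2 : 2*s+1 < 2*k-1 := by omega
  set i1 : Fin (2*k-1) := ⟨2*s, hb1⟩ with hi1
  set i2 : Fin (2*k-1) := ⟨2*s+1, hb2⟩ with hi2
  have hne12 : i1 ≠ i2 := by
    simp only [hi1, hi2, Fin.mk.injEq, ne_eq]; omega
  -- at the two private coordinates, rb0 differs from the cop's base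
  have key : ∀ (i : Fin (2*k-1)), (i : ℕ)/2 = s → (i : ℕ) < 2 * (Mset T cinit).card →
      rb0 T cinit i ≠ (cinit j).1 i := by
    intro i hdiv hlt
    unfold rb0
    rw [dif_pos hlt]
    have harg : ((Mset T cinit).equivFin.symm ⟨(i : ℕ)/2, by omega⟩ :
        {x // x ∈ Mset T cinit}) = ⟨j, hj⟩ := by
      rw [← he]
      have : (⟨(i : ℕ)/2, by omega⟩ : Fin (Mset T cinit).card) = e ⟨j, hj⟩ := by
        apply Fin.ext; simp [hdiv, hs]
      rw [this, Equiv.symm_apply_apply]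
    have hval : (((Mset T cinit).equivFin.symm ⟨(i : ℕ)/2, by omega⟩ :
        {x // x ∈ Mset T cinit}) : Fin n) = j := congrArg Subtype.val harg
    rw [← hval]
    exact Classical.choose_spec (exists_ne _)
  have hk1 : rb0 T cinit i1 ≠ (cinit j).1 i1 :=
    key i1 (by simp only [hi1]; omega) (by simp only [hi1]; omega)
  have hk2 : rb0 T cinit i2 ≠ (cinit j).1 i2 :=
    key i2 (by simp only [hi2]; omega) (by simp only [hi2]; omega)
  -- these coordinates survive the parity correction
  have hr1 : rbase T hconn cinit hk i1 = rb0 T cinit i1 := by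
    unfold rbase
    split
    · rfl
    · rw [Function.update_of_ne]
      simp only [hi1, ne_eq, lastC, Fin.mk.injEq]
      omega
  have hr2 : rbase T hconn cinit hk i2 = rb0 T cinit i2 := by
    unfold rbase
    split
    · rfl
    · rw [Function.update_of_ne]
      simp only [hi2, ne_eq, lastC, Fin.mk.injEq]
      omega
  have hp1 : 1 ≤ (T i1).dist ((cinit j).1 i1) (rbase T hconn cinit hk i1) := by
    rw [hr1]
    exact (hconn i1).pos_dist_of_ne (fun hcontra => hk1 hcontra.symm)
  have hp2 : 1 ≤ (T i2).dist ((cinit j).1 i2) (rbase T hconn cinit hk i2) := by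
    rw [hr2]
    exact (hconn i2).pos_dist_of_ne (fun hcontra => hk2 hcontra.symm)
  have hsum : (T i1).dist ((cinit j).1 i1) (rbase T hconn cinit hk i1)
      + (T i2).dist ((cinit j).1 i2) (rbase T hconn cinit hk i2)
      ≤ DD T ((cinit j).1) (rbase T hconn cinit hk) := by
    unfold DD
    rw [← Finset.sum_pair (f := fun i => (T i).dist ((cinit j).1 i)
      (rbase T hconn cinit hk i)) hne12]
    exact Finset.sum_le_sum_of_subset (Finset.subset_univ _)
  omega

include hacyclic in
lemma rbase_mem_iff (hk : 2 ≤ k) :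
    ∀ j, (Odd (DD T ((cinit j).1) (rbase T hconn cinit hk)) ↔ j ∈ Mset T cinit) := by
  intro j
  have hpar := DD_parity T hconn hacyclic (bpt : ∀ i, W i) ((cinit j).1)
    (rbase T hconn cinit hk)
  have hρ := rbase_parity T hconn hacyclic cinit hk
  have hlt := goodP_lt T cinit
  have hmem : j ∈ Mset T cinit ↔ DD T ((cinit j).1) (bpt : ∀ i, W i) % 2 ≠ goodP T cinit := by
    unfold Mset
    simp
  rw [hmem, Nat.odd_iff]
  omega

end Lower2
section Lower3

variable {k t n : ℕ} {W : Fin (2*k-1) → Type u}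
variable [∀ i, Fintype (W i)] [∀ i, Nontrivial (W i)]
variable (T : ∀ i, SimpleGraph (W i))
variable (hconn : ∀ i, (T i).Connected) (hacyclic : ∀ i, (T i).IsAcyclic)

lemma supp_card (c r : ∀ i, W i) :
    (Finset.univ.filter fun i => (T i).dist (c i) (r i) ≠ 0).card ≤ DD T c r := by
  classical
  rw [Finset.card_eq_sum_ones]
  refine le_trans (Finset.sum_le_sum fun i hi => ?_)
    (Finset.sum_le_sum_of_subset (Finset.filter_subset _ _))
  have := (Finset.mem_filter.mp hi).2
  omega

include hconn hacyclic in
lemma DD_step2 {x y : ∀ i, W i} (hxy : (piBox T).Adj x y) (r : ∀ i, W i) :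
    DD T x r + 1 = DD T y r ∨ DD T y r + 1 = DD T x r := by
  have := DD_step T hconn hacyclic hxy r
  rw [DD_comm T r x, DD_comm T r y] at this
  exact this

include hconn in
lemma RP_exists (hk : 2 ≤ k) (hnt : n < t)
    (c' : Fin n → ((∀ i, W i) × Fin t)) (rob : (∀ i, W i) × Fin t)
    (hfew : (Finset.univ.filter fun j => DD T ((c' j).1) rob.1 = 2).card ≤ k - 1) :
    ∃ m, RP T ((c', rob) : CRConfig ((∀ i, W i) × Fin t) n) m := by
  classical
  set Crit := Finset.univ.filter fun j => DD T ((c' j).1) rob.1 = 2 with hCrit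
  set bigbad := Crit.biUnion
    (fun j => Finset.univ.filter fun i => (T i).dist ((c' j).1 i) (rob.1 i) ≠ 0) with hbb
  have hbbcard : bigbad.card ≤ 2 * (k - 1) := by
    have h1 : bigbad.card ≤ ∑ j ∈ Crit,
        (Finset.univ.filter fun i => (T i).dist ((c' j).1 i) (rob.1 i) ≠ 0).card :=
      Finset.card_biUnion_le
    have h2 : ∑ j ∈ Crit,
        (Finset.univ.filter fun i => (T i).dist ((c' j).1 i) (rob.1 i) ≠ 0).card
        ≤ ∑ _j ∈ Crit, 2 := by
      refine Finset.sum_le_sum fun j hj => ?_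
      exact le_trans (supp_card T ((c' j).1) rob.1)
        (le_of_eq ((Finset.mem_filter.mp hj).2))
    rw [Finset.sum_const, smul_eq_mul] at h2
    omega
  have hex_i0 : ∃ i0 : Fin (2*k-1), i0 ∉ bigbad := by
    by_contra hno
    push_neg at hno
    have : (Finset.univ : Finset (Fin (2*k-1))) ⊆ bigbad := fun i _ => hno i
    have := Finset.card_le_card this
    simp only [Finset.card_univ, Fintype.card_fin] at this
    omega
  obtain ⟨i0, hi0⟩ := hex_i0
  obtain ⟨w, hw⟩ : ∃ w, (T i0).Adj (rob.1 i0) w := exists_adj (hconn i0) _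
  obtain ⟨cp, hcp⟩ := exists_free_copy hnt (fun j => (c' j).2)
  refine ⟨(Function.update rob.1 i0 w, cp), piBox_adj_update T hw, fun j heq => ?_, fun j hj2 => ?_⟩
  · exact hcp j (congrArg Prod.snd heq).symm
  · have hj2' : DD T ((c' j).1) rob.1 = 2 := hj2
    have hjcrit : j ∈ Crit := Finset.mem_filter.mpr ⟨Finset.mem_univ _, hj2'⟩
    have hzero : (T i0).dist ((c' j).1 i0) (rob.1 i0) = 0 := by
      by_contra hnz
      exact hi0 (Finset.mem_biUnion.mpr ⟨j, hjcrit,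
        Finset.mem_filter.mpr ⟨Finset.mem_univ _, hnz⟩⟩)
    have heq0 : (c' j).1 i0 = rob.1 i0 := ((hconn i0).dist_eq_zero_iff).mp hzero
    have hupd := DD_update T ((c' j).1) rob.1 i0 w
    have hone : (T i0).dist ((c' j).1 i0) w = 1 := by
      rw [heq0, SimpleGraph.dist_eq_one_iff_adj]
      exact hw
    show DD T ((c' j).1) (Function.update rob.1 i0 w) = 3
    omega

include hconn hacyclic in
theorem lower_no_win (hk : 2 ≤ k) (hn : n ≤ 2*k-1) (hnt : n < t) :
    ¬ ActiveCopsWin (blowup (piBox T) t) n := by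
  classical
  rintro ⟨cs, hcs⟩
  set rs : ActiveRobberStrategy (blowup (piBox T) t) n :=
    { init := fun ci => (rbase T hconn ci hk,
        Classical.choose (exists_free_copy hnt (fun j => (ci j).2)))
      move := robMove T hconn hk
      move_adj := robMove_adj T hconn hk } with hrs
  obtain ⟨τ, hτ⟩ := hcs rs
  set P : ℕ → List (CRConfig ((∀ i, W i) × Fin t) n) × CRConfig ((∀ i, W i) × Fin t) n :=
    crPlay n cs.init rs.init cs.move rs.move with hP
  set M0 := Mset T cs.init with hM0
  have INV : ∀ σ, (∀ j, (DD T (((P σ).2.1 j).1) ((P σ).2.2).1 % 2 = 1 ↔ j ∈ M0)) ∧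
      (∀ j ∈ M0, 3 ≤ DD T (((P σ).2.1 j).1) ((P σ).2.2).1) ∧
      (∀ j, (P σ).2.1 j ≠ (P σ).2.2) := by
    intro σ
    induction σ with
    | zero =>
      refine ⟨fun j => ?_, fun j hj => ?_, fun j heq => ?_⟩
      · show DD T ((cs.init j).1) (rbase T hconn cs.init hk) % 2 = 1 ↔ j ∈ M0
        have := rbase_mem_iff T hconn hacyclic cs.init hk j
        rw [Nat.odd_iff] at this
        exact this
      · show 3 ≤ DD T ((cs.init j).1) (rbase T hconn cs.init hk)
        have h4 := rbase_dist T hconn hacyclic cs.init hk hn j hj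
        have h5 := (rbase_mem_iff T hconn hacyclic cs.init hk j).mpr hj
        rw [Nat.odd_iff] at h5
        omega
      · exact Classical.choose_spec (exists_free_copy hnt (fun j => (cs.init j).2)) j
          (congrArg Prod.snd heq)
    | succ σ ih =>
      obtain ⟨ihA, ihB, ihC⟩ := ih
      set c' := cs.move (P σ).1 (P σ).2 with hc'
      have hcops1 : (P (σ+1)).2.1 = c' := rfl
      have hrob1 : (P (σ+1)).2.2 = rs.move (P σ).1 (c', (P σ).2.2) := rfl
      have hcopstep : ∀ j, DD T (((P σ).2.1 j).1) ((P σ).2.2).1 + 1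
            = DD T ((c' j).1) ((P σ).2.2).1
          ∨ DD T ((c' j).1) ((P σ).2.2).1 + 1
            = DD T (((P σ).2.1 j).1) ((P σ).2.2).1 := by
        intro j
        exact DD_step2 T hconn hacyclic (cs.move_adj (P σ).1 (P σ).2 j) _
      have hfew : (Finset.univ.filter fun j =>
          DD T ((c' j).1) ((P σ).2.2).1 = 2).card ≤ k - 1 := by
        refine le_trans (Finset.card_le_card ?_) (Mset_card T cs.init hn hk)
        intro j hj
        have h2 := (Finset.mem_filter.mp hj).2
        have := hcopstep j
        have ha := ihA j
        rw [← hM0]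
        exact (ihA j).mp (by omega)
      have hex : ∃ m, RP T ((c', (P σ).2.2) :
          CRConfig ((∀ i, W i) × Fin t) n) m :=
        RP_exists T hconn hk hnt c' (P σ).2.2 hfew
      have hmove : rs.move (P σ).1 (c', (P σ).2.2)
          = robMove T hconn hk (P σ).1 (c', (P σ).2.2) := rfl
      have hRP : RP T ((c', (P σ).2.2) : CRConfig ((∀ i, W i) × Fin t) n)
          ((P (σ+1)).2.2) := by
        rw [hrob1, hmove]
        unfold robMove
        rw [dif_pos hex]
        exact hex.choose_spec
      obtain ⟨hRP1, hRP2, hRP3⟩ := hRP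
      have hrobstep : ∀ j, DD T ((c' j).1) ((P σ).2.2).1 + 1
            = DD T ((c' j).1) ((P (σ+1)).2.2).1
          ∨ DD T ((c' j).1) ((P (σ+1)).2.2).1 + 1
            = DD T ((c' j).1) ((P σ).2.2).1 := by
        intro j
        exact DD_step T hconn hacyclic hRP1 ((c' j).1)
      rw [hcops1]
      refine ⟨fun j => ?_, fun j hj => ?_, fun j heq => ?_⟩
      · have h1 := hcopstep j
        have h2 := hrobstep j
        have h3 := ihA j
        constructor
        · intro h; exact h3.mp (by omega)
        · intro h; have := h3.mpr h; omega
      · have h1 := hcopstep j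
        have h2 := hrobstep j
        have h3 := (ihA j).mpr hj
        have h4 := ihB j hj
        by_cases hb : DD T ((c' j).1) ((P σ).2.2).1 = 2
        · have h5 : DD T ((c' j).1) ((P (σ+1)).2.2).1 = 3 := hRP3 j hb
          omega
        · omega
      · exact hRP2 j heq.symm
  rcases hτ with ⟨i, hi⟩ | ⟨i, hi⟩
  · exact (INV τ).2.2 i hi
  · have hadj := cs.move_adj (P τ).1 (P τ).2 i
    rw [hi] at hadj
    have h1 : DD T (((P τ).2.1 i).1) (((P τ).2.2).1) = 1 :=
      (DD_eq_one_iff_adj T hconn).mp hadj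
    have h2 := ((INV τ).1 i).mp (by omega)
    have h3 := (INV τ).2.1 i h2
    omega

end Lower3
section Upper

variable {k t : ℕ} {W : Fin (2*k-1) → Type u}
variable [∀ i, Fintype (W i)] [∀ i, Nontrivial (W i)]
variable (T : ∀ i, SimpleGraph (W i))
variable (hconn : ∀ i, (T i).Connected) (hacyclic : ∀ i, (T i).IsAcyclic)

/-- First-argument version of `DD_update`. -/
lemma DD_update1 (c r : ∀ i, W i) (i : Fin (2*k-1)) (w : W i) :
    DD T (Function.update c i w) r + (T i).dist (c i) (r i)
      = DD T c r + (T i).dist w (r i) := by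
  have := DD_update T r c i w
  rw [DD_comm T r (Function.update c i w), DD_comm T r c] at this
  rw [show (T i).dist (c i) (r i) = (T i).dist (r i) (c i) from SimpleGraph.dist_comm,
    show (T i).dist w (r i) = (T i).dist (r i) w from SimpleGraph.dist_comm]
  exact this

open Classical in
/-- The cops' moving rule (for a single cop `j`). -/
noncomputable def copMove (hk : 2 ≤ k) (c : CRConfig ((∀ i, W i) × Fin t) (2*k))
    (j : Fin (2*k)) : (∀ i, W i) × Fin t :=
  if hD : (piBox T).Adj ((c.1 j).1) c.2.1 then c.2
  else if hx : ∃ i : Fin (2*k-1), ∃ w : W i, (T i).Adj ((c.1 j).1 i) w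
      ∧ (T i).dist w (c.2.1 i) + 1 = (T i).dist ((c.1 j).1 i) (c.2.1 i)
      ∧ ((i : ℕ)/2 = (j : ℕ) % k → (T i).dist ((c.1 j).1 i) (c.2.1 i) ≠ 1)
  then (Function.update ((c.1 j).1) hx.choose hx.choose_spec.choose, (c.1 j).2)
  else defMove T hconn hk (c.1 j)

lemma copMove_adj (hk : 2 ≤ k) (c : CRConfig ((∀ i, W i) × Fin t) (2*k)) (j : Fin (2*k)) :
    (blowup (piBox T) t).Adj (c.1 j) (copMove T hconn hk c j) := by
  unfold copMove
  split
  · next hD => exact hD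
  · split
    · next hx => exact piBox_adj_update T hx.choose_spec.choose_spec.1
    · exact defMove_adj T hconn hk (c.1 j)

include hconn in
/-- Existence of a legal strictly-approaching move respecting ownership. -/
lemma copChoice_exists (hk : 2 ≤ k) (cb rb : ∀ i, W i) (j : Fin (2*k))
    (hodd : DD T cb rb % 2 = 1) (hne1 : DD T cb rb ≠ 1) :
    ∃ i : Fin (2*k-1), ∃ w : W i, (T i).Adj (cb i) w
      ∧ (T i).dist w (rb i) + 1 = (T i).dist (cb i) (rb i)
      ∧ ((i : ℕ)/2 = (j : ℕ) % k → (T i).dist (cb i) (rb i) ≠ 1) := by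
  classical
  have hD3 : 3 ≤ DD T cb rb := by omega
  by_cases hcase : ∃ i : Fin (2*k-1), ¬((i : ℕ)/2 = (j : ℕ) % k)
      ∧ (T i).dist (cb i) (rb i) ≠ 0
  · obtain ⟨i, hnown, hnz⟩ := hcase
    obtain ⟨w, hw1, hw2⟩ := exists_toward (hconn i) hnz
    exact ⟨i, w, hw1, hw2, fun h => absurd h hnown⟩
  · push_neg at hcase
    -- all unowned coordinates are at distance zero, so some owned one has distance ≥ 2
    have hOcard : (Finset.univ.filter fun i : Fin (2*k-1) =>
        (i : ℕ)/2 = (j : ℕ) % k).card ≤ 2 := by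
      have hsub : (Finset.univ.filter fun i : Fin (2*k-1) => (i : ℕ)/2 = (j : ℕ) % k)
          ⊆ (Finset.univ.filter fun i : Fin (2*k-1) => (i : ℕ) = 2*((j : ℕ) % k))
            ∪ (Finset.univ.filter fun i : Fin (2*k-1) => (i : ℕ) = 2*((j : ℕ) % k) + 1) := by
        intro i hi
        have := (Finset.mem_filter.mp hi).2
        rw [Finset.mem_union, Finset.mem_filter, Finset.mem_filter]
        rcases Nat.lt_or_ge ((i : ℕ)) (2*((j : ℕ) % k) + 1) with h | h
        · exact Or.inl ⟨Finset.mem_univ _, by omega⟩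
        · exact Or.inr ⟨Finset.mem_univ _, by omega⟩
      refine le_trans (Finset.card_le_card hsub) (le_trans (Finset.card_union_le _ _) ?_)
      have h1 : ∀ m : ℕ, (Finset.univ.filter fun i : Fin (2*k-1) => (i : ℕ) = m).card ≤ 1 := by
        intro m
        refine Finset.card_le_one.mpr fun a ha b hb => ?_
        have ha' := (Finset.mem_filter.mp ha).2
        have hb' := (Finset.mem_filter.mp hb).2
        exact Fin.ext (by omega)
      have := h1 (2*((j : ℕ) % k))
      have := h1 (2*((j : ℕ) % k) + 1)
      omega
    have hex2 : ∃ i : Fin (2*k-1), 2 ≤ (T i).dist (cb i) (rb i) := by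
      by_contra hno
      push_neg at hno
      have hsplit := Finset.sum_filter_add_sum_filter_not Finset.univ
        (fun i : Fin (2*k-1) => (i : ℕ)/2 = (j : ℕ) % k)
        (fun i => (T i).dist (cb i) (rb i))
      have hz : ∑ i ∈ (Finset.univ.filter fun i : Fin (2*k-1) =>
          ¬((i : ℕ)/2 = (j : ℕ) % k)), (T i).dist (cb i) (rb i) = 0 := by
        refine Finset.sum_eq_zero fun i hi => ?_
        have := (Finset.mem_filter.mp hi).2
        exact hcase i this
      have hb : ∑ i ∈ (Finset.univ.filter fun i : Fin (2*k-1) =>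
          (i : ℕ)/2 = (j : ℕ) % k), (T i).dist (cb i) (rb i)
          ≤ (Finset.univ.filter fun i : Fin (2*k-1) =>
            (i : ℕ)/2 = (j : ℕ) % k).card * 1 := by
        refine le_trans (Finset.sum_le_card_nsmul _ _ 1 fun i _ => ?_) (by simp)
        have := hno i
        omega
      have : DD T cb rb = ∑ i ∈ (Finset.univ.filter fun i : Fin (2*k-1) =>
          (i : ℕ)/2 = (j : ℕ) % k), (T i).dist (cb i) (rb i)
          + ∑ i ∈ (Finset.univ.filter fun i : Fin (2*k-1) =>
            ¬((i : ℕ)/2 = (j : ℕ) % k)), (T i).dist (cb i) (rb i) := (hsplit).symm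
      omega
    obtain ⟨i, hi2⟩ := hex2
    obtain ⟨w, hw1, hw2⟩ := exists_toward (hconn i)
      (show (T i).dist (cb i) (rb i) ≠ 0 by omega)
    refine ⟨i, w, hw1, hw2, fun _ => ?_⟩
    omega

end Upper
section Upper2

variable {k t : ℕ} {W : Fin (2*k-1) → Type u}
variable [∀ i, Fintype (W i)] [∀ i, Nontrivial (W i)]
variable (T : ∀ i, SimpleGraph (W i))
variable (hconn : ∀ i, (T i).Connected) (hacyclic : ∀ i, (T i).IsAcyclic)

include hconn hacyclic in
theorem upper_win (hk : 2 ≤ k) (htp : 0 < t) :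
    ActiveCopsWin (blowup (piBox T) t) (2*k) := by
  classical
  have hfcP : (0 : ℕ) < 2*k-1 := by omega
  set fc : Fin (2*k-1) := ⟨0, hfcP⟩ with hfc
  set b1 : ∀ i, W i := Function.update (bpt : ∀ i, W i) fc
    (Classical.choose (exists_adj (hconn fc) ((bpt : ∀ i, W i) fc))) with hb1
  set cinit : Fin (2*k) → ((∀ i, W i) × Fin t) :=
    fun j => if (j : ℕ) < k then ((bpt : ∀ i, W i), ⟨0, htp⟩) else (b1, ⟨0, htp⟩) with hcinit
  refine ⟨⟨cinit, fun _h c j => copMove T hconn hk c j,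
    fun h c j => copMove_adj T hconn hk c j⟩, ?_⟩
  intro rs
  by_contra hnc
  unfold ActiveCapture crCaptures at hnc
  push_neg at hnc
  set P : ℕ → List (CRConfig ((∀ i, W i) × Fin t) (2*k))
      × CRConfig ((∀ i, W i) × Fin t) (2*k) :=
    crPlay (2*k) cinit rs.init (fun _h c j => copMove T hconn hk c j) rs.move with hP
  have hnc1 : ∀ τ j, (P τ).2.1 j ≠ (P τ).2.2 := fun τ j => (hnc τ).1 j
  have hnc2 : ∀ τ j, copMove T hconn hk (P τ).2 j ≠ (P τ).2.2 := fun τ j => (hnc τ).2 j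
  have hPc : ∀ τ j, (P (τ+1)).2.1 j = copMove T hconn hk (P τ).2 j := fun τ j => rfl
  have hrstep : ∀ τ, (piBox T).Adj (((P τ).2.2).1) (((P (τ+1)).2.2).1) := by
    intro τ
    exact rs.move_adj (P τ).1 (fun j => copMove T hconn hk (P τ).2 j, (P τ).2.2)
  have hcstep : ∀ τ j, (piBox T).Adj (((P τ).2.1 j).1)
      ((copMove T hconn hk (P τ).2 j).1) :=
    fun τ j => copMove_adj T hconn hk (P τ).2 j
  set r0 : ∀ i, W i := ((P 0).2.2).1 with hr0
  -- parity is preserved along the play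
  have hpar : ∀ τ j, DD T (((P τ).2.1 j).1) (((P τ).2.2).1) % 2
      = DD T ((cinit j).1) r0 % 2 := by
    intro τ
    induction τ with
    | zero => intro j; rfl
    | succ τ ih =>
      intro j
      have h1 := DD_step2 T hconn hacyclic (hcstep τ j) (((P τ).2.2).1)
      have h2 := DD_step T hconn hacyclic (hrstep τ) ((copMove T hconn hk (P τ).2 j).1)
      have ihj := ih j
      show DD T ((copMove T hconn hk (P τ).2 j).1) (((P (τ+1)).2.2).1) % 2 = _
      omega
  -- an odd cop is never at distance 1 (else it would capture), hence always ≥ 3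
  have hodd3 : ∀ τ j, DD T ((cinit j).1) r0 % 2 = 1 →
      3 ≤ DD T (((P τ).2.1 j).1) (((P τ).2.2).1) := by
    intro τ j hj
    have hp := hpar τ j
    have hne1 : DD T (((P τ).2.1 j).1) (((P τ).2.2).1) ≠ 1 := by
      intro h1
      apply hnc2 τ j
      have hadj : (piBox T).Adj (((P τ).2.1 j).1) (((P τ).2.2).1) :=
        (DD_eq_one_iff_adj T hconn).mpr h1
      unfold copMove
      rw [dif_pos hadj]
    omega
  -- the two initial groups have opposite parities
  have hflip : DD T b1 r0 % 2 ≠ DD T ((bpt : ∀ i, W i)) r0 % 2 := by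
    have hy := Classical.choose_spec (exists_adj (hconn fc) ((bpt : ∀ i, W i) fc))
    have hupd := DD_update1 T ((bpt : ∀ i, W i)) r0 fc
      (Classical.choose (exists_adj (hconn fc) ((bpt : ∀ i, W i) fc)))
    have hdd := tree_adj_dist (hconn fc) (hacyclic fc) hy (r0 fc)
    have e1 : (T fc).dist (r0 fc)
        (Classical.choose (exists_adj (hconn fc) ((bpt : ∀ i, W i) fc)))
        = (T fc).dist (Classical.choose (exists_adj (hconn fc) ((bpt : ∀ i, W i) fc)))
          (r0 fc) := SimpleGraph.dist_comm
    have e2 : (T fc).dist (r0 fc) ((bpt : ∀ i, W i) fc)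
        = (T fc).dist ((bpt : ∀ i, W i) fc) (r0 fc) := SimpleGraph.dist_comm
    rw [e1, e2] at hdd
    rw [hb1]
    omega
  -- the owner of each coordinate
  have hhalf : ∀ i : Fin (2*k-1), (i : ℕ)/2 < k := fun i => by
    have := i.isLt
    omega
  set oc : Fin (2*k-1) → Fin (2*k) := fun i =>
    if DD T ((bpt : ∀ i, W i)) r0 % 2 = 1 then ⟨(i : ℕ)/2, by have := hhalf i; omega⟩
    else ⟨k + (i : ℕ)/2, by have := hhalf i; omega⟩ with hoc
  have hocOdd : ∀ i, DD T ((cinit (oc i)).1) r0 % 2 = 1 := by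
    intro i
    rw [hoc]
    split
    · next hg =>
      have : ((⟨(i : ℕ)/2, by have := hhalf i; omega⟩ : Fin (2*k)) : ℕ) < k := hhalf i
      simp only [hcinit, if_pos this]
      exact hg
    · next hg =>
      have h2 : ¬(((⟨k + (i : ℕ)/2, by have := hhalf i; omega⟩ : Fin (2*k)) : ℕ) < k) := by
        simp only [not_lt]
        omega
      simp only [hcinit, if_neg h2]
      have := hflip
      omega
  have hocOwn : ∀ i : Fin (2*k-1), (i : ℕ)/2 = ((oc i : Fin (2*k)) : ℕ) % k := by
    intro i
    rw [hoc]
    have hik := hhalf i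
    split
    · simp only
      rw [Nat.mod_eq_of_lt hik]
    · simp only
      rw [Nat.add_mod_left, Nat.mod_eq_of_lt hik]
  -- the odd group
  set O : Finset (Fin (2*k)) :=
    Finset.univ.filter (fun j => DD T ((cinit j).1) r0 % 2 = 1) with hO
  have hocO : ∀ i, oc i ∈ O := fun i =>
    Finset.mem_filter.mpr ⟨Finset.mem_univ _, hocOdd i⟩
  -- the weight
  set Λ : ℕ := (∑ i : Fin (2*k-1), Fintype.card (W i)) + 2 with hΛ
  have hΛ2 : 2 ≤ Λ := by rw [hΛ]; omega
  have hroomBound : ∀ (i : Fin (2*k-1)) (c r : W i), treeRoom (T i) c r + 2 ≤ Λ := by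
    intro i c r
    have h1 := treeRoom_le_card (hconn i) c r
    have h2 : Fintype.card (W i) ≤ ∑ i' : Fin (2*k-1), Fintype.card (W i') :=
      Finset.single_le_sum (f := fun i' => Fintype.card (W i'))
        (fun _ _ => Nat.zero_le _) (Finset.mem_univ i)
    omega
  -- the potential
  set Ξ : ℕ → ℕ := fun τ =>
    Λ * (∑ j ∈ O, DD T (((P τ).2.1 j).1) (((P τ).2.2).1))
      + ∑ i : Fin (2*k-1), treeRoom (T i) ((((P τ).2.1 (oc i)).1) i) ((((P τ).2.2).1) i)
    with hΞ
  -- the main decrease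
  have hdec : ∀ τ, Ξ (τ+1) + 1 ≤ Ξ τ := by
    intro τ
    -- the cops' chosen moves
    have hKey : ∀ j ∈ O, ∃ (i0 : Fin (2*k-1)) (w : W i0),
        ((P (τ+1)).2.1 j).1 = Function.update (((P τ).2.1 j).1) i0 w
        ∧ (T i0).Adj ((((P τ).2.1 j).1) i0) w
        ∧ (T i0).dist w (((P τ).2.2).1 i0) + 1
            = (T i0).dist ((((P τ).2.1 j).1) i0) (((P τ).2.2).1 i0)
        ∧ ((i0 : ℕ)/2 = (j : ℕ) % k →
            (T i0).dist ((((P τ).2.1 j).1) i0) (((P τ).2.2).1 i0) ≠ 1) := by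
      intro j hj
      have hjodd : DD T ((cinit j).1) r0 % 2 = 1 := (Finset.mem_filter.mp hj).2
      have h3 := hodd3 τ j hjodd
      have hp := hpar τ j
      have hne1 : DD T (((P τ).2.1 j).1) (((P τ).2.2).1) ≠ 1 := by omega
      have hnadj : ¬ (piBox T).Adj (((P τ).2.1 j).1) (((P τ).2.2).1) := by
        intro hadj; exact hne1 ((DD_eq_one_iff_adj T hconn).mp hadj)
      have hxj : ∃ i : Fin (2*k-1), ∃ w : W i, (T i).Adj ((((P τ).2).1 j).1 i) w
          ∧ (T i).dist w (((P τ).2).2.1 i) + 1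
              = (T i).dist ((((P τ).2).1 j).1 i) (((P τ).2).2.1 i)
          ∧ ((i : ℕ)/2 = (j : ℕ) % k →
              (T i).dist ((((P τ).2).1 j).1 i) (((P τ).2).2.1 i) ≠ 1) :=
        copChoice_exists T hconn hk (((P τ).2.1 j).1) (((P τ).2.2).1) j (by omega) hne1
      refine ⟨hxj.choose, hxj.choose_spec.choose, ?_, hxj.choose_spec.choose_spec⟩
      show (copMove T hconn hk (P τ).2 j).1 = _
      unfold copMove
      rw [dif_neg hnadj, dif_pos hxj]
    -- cop phase: each odd cop strictly approaches
    have hmid : ∀ j ∈ O, DD T (((P (τ+1)).2.1 j).1) (((P τ).2.2).1) + 1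
        = DD T (((P τ).2.1 j).1) (((P τ).2.2).1) := by
      intro j hj
      obtain ⟨i0, w, heq, hadj0, htow, hown⟩ := hKey j hj
      rw [heq]
      have hupd := DD_update1 T (((P τ).2.1 j).1) (((P τ).2.2).1) i0 w
      omega
    -- cop phase: rooms do not increase
    have hroomMid : ∀ i : Fin (2*k-1),
        treeRoom (T i) ((((P (τ+1)).2.1 (oc i)).1) i) ((((P τ).2.2).1) i)
          ≤ treeRoom (T i) ((((P τ).2.1 (oc i)).1) i) ((((P τ).2.2).1) i) := by
      intro i
      obtain ⟨i0, w, heq, hadj0, htow, hown⟩ := hKey (oc i) (hocO i)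
      rw [heq]
      by_cases hii : i0 = i
      · subst hii
        rw [Function.update_self]
        have hd1 : (T i0).dist ((((P τ).2.1 (oc i0)).1) i0) ((((P τ).2.2).1) i0) ≠ 1 :=
          hown (hocOwn i0)
        exact treeRoom_toward (hconn i0) (hacyclic i0) hadj0 htow (by omega)
      · rw [Function.update_of_ne (Ne.symm hii)]
    -- the robber's move
    obtain ⟨istar, hsadj, hseq⟩ := hrstep τ
    have hm1 : ((P (τ+1)).2.2).1
        = Function.update (((P τ).2.2).1) istar ((((P (τ+1)).2.2).1) istar) := by
      funext x
      by_cases hx : x = istar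
      · subst hx; rw [Function.update_self]
      · rw [Function.update_of_ne hx]
        exact (hseq x hx).symm
    have hDle : ∀ j ∈ O, DD T (((P (τ+1)).2.1 j).1) (((P (τ+1)).2.2).1)
        ≤ DD T (((P τ).2.1 j).1) (((P τ).2.2).1) := by
      intro j hj
      have h1 := hmid j hj
      have h2 := DD_step T hconn hacyclic (hrstep τ) (((P (τ+1)).2.1 j).1)
      omega
    have hRoomEq : ∀ i : Fin (2*k-1), i ≠ istar →
        treeRoom (T i) ((((P (τ+1)).2.1 (oc i)).1) i) ((((P (τ+1)).2.2).1) i)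
          ≤ treeRoom (T i) ((((P τ).2.1 (oc i)).1) i) ((((P τ).2.2).1) i) := by
      intro i hne
      have e : (((P (τ+1)).2.2).1) i = (((P τ).2.2).1) i := (hseq i hne).symm
      rw [e]
      exact hroomMid i
    have eR1 : (∑ i ∈ Finset.univ.erase istar, treeRoom (T i) ((((P (τ+1)).2.1 (oc i)).1) i)
          ((((P (τ+1)).2.2).1) i))
        + treeRoom (T istar) ((((P (τ+1)).2.1 (oc istar)).1) istar) ((((P (τ+1)).2.2).1) istar)
        = ∑ i : Fin (2*k-1), treeRoom (T i) ((((P (τ+1)).2.1 (oc i)).1) i)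
          ((((P (τ+1)).2.2).1) i) :=
      Finset.sum_erase_add _ _ (Finset.mem_univ istar)
    have eR2 : (∑ i ∈ Finset.univ.erase istar, treeRoom (T i) ((((P τ).2.1 (oc i)).1) i)
          ((((P τ).2.2).1) i))
        + treeRoom (T istar) ((((P τ).2.1 (oc istar)).1) istar) ((((P τ).2.2).1) istar)
        = ∑ i : Fin (2*k-1), treeRoom (T i) ((((P τ).2.1 (oc i)).1) i) ((((P τ).2.2).1) i) :=
      Finset.sum_erase_add _ _ (Finset.mem_univ istar)
    have eR3 : ∑ i ∈ Finset.univ.erase istar,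
        treeRoom (T i) ((((P (τ+1)).2.1 (oc i)).1) i) ((((P (τ+1)).2.2).1) i)
        ≤ ∑ i ∈ Finset.univ.erase istar,
          treeRoom (T i) ((((P τ).2.1 (oc i)).1) i) ((((P τ).2.2).1) i) :=
      Finset.sum_le_sum fun i hi => hRoomEq i (Finset.ne_of_mem_erase hi)
    simp only [hΞ]
    rcases tree_adj_dist (hconn istar) (hacyclic istar) hsadj
        ((((P (τ+1)).2.1 (oc istar)).1) istar) with haway | htoward
    · -- the robber moved away from the owner of his coordinate
      have hAway : treeRoom (T istar) ((((P (τ+1)).2.1 (oc istar)).1) istar)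
            ((((P (τ+1)).2.2).1) istar) + 1
          ≤ treeRoom (T istar) ((((P τ).2.1 (oc istar)).1) istar)
            ((((P τ).2.2).1) istar) :=
        le_trans (treeRoom_away (hconn istar) hsadj haway) (hroomMid istar)
      have hMul : Λ * (∑ j ∈ O, DD T (((P (τ+1)).2.1 j).1) (((P (τ+1)).2.2).1))
          ≤ Λ * (∑ j ∈ O, DD T (((P τ).2.1 j).1) (((P τ).2.2).1)) :=
        Nat.mul_le_mul_left Λ (Finset.sum_le_sum hDle)
      omega
    · -- the robber moved toward the owner: the Λ-weighted part drops
      have howner1 : DD T (((P (τ+1)).2.1 (oc istar)).1) (((P (τ+1)).2.2).1) + 2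
          = DD T (((P τ).2.1 (oc istar)).1) (((P τ).2.2).1) := by
        have h1 := hmid (oc istar) (hocO istar)
        have hupd := DD_update T (((P (τ+1)).2.1 (oc istar)).1) (((P τ).2.2).1) istar
          ((((P (τ+1)).2.2).1) istar)
        rw [← hm1] at hupd
        omega
      have eA1 : (∑ j ∈ O.erase (oc istar), DD T (((P (τ+1)).2.1 j).1) (((P (τ+1)).2.2).1))
          + DD T (((P (τ+1)).2.1 (oc istar)).1) (((P (τ+1)).2.2).1)
          = ∑ j ∈ O, DD T (((P (τ+1)).2.1 j).1) (((P (τ+1)).2.2).1) :=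
        Finset.sum_erase_add _ _ (hocO istar)
      have eA2 : (∑ j ∈ O.erase (oc istar), DD T (((P τ).2.1 j).1) (((P τ).2.2).1))
          + DD T (((P τ).2.1 (oc istar)).1) (((P τ).2.2).1)
          = ∑ j ∈ O, DD T (((P τ).2.1 j).1) (((P τ).2.2).1) :=
        Finset.sum_erase_add _ _ (hocO istar)
      have eA3 : ∑ j ∈ O.erase (oc istar), DD T (((P (τ+1)).2.1 j).1) (((P (τ+1)).2.2).1)
          ≤ ∑ j ∈ O.erase (oc istar), DD T (((P τ).2.1 j).1) (((P τ).2.2).1) :=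
        Finset.sum_le_sum fun j hj => hDle j (Finset.mem_of_mem_erase hj)
      have hAsum : (∑ j ∈ O, DD T (((P (τ+1)).2.1 j).1) (((P (τ+1)).2.2).1)) + 2
          ≤ ∑ j ∈ O, DD T (((P τ).2.1 j).1) (((P τ).2.2).1) := by
        omega
      have e4 := hroomBound istar ((((P (τ+1)).2.1 (oc istar)).1) istar)
        ((((P (τ+1)).2.2).1) istar)
      have hMul : Λ * ((∑ j ∈ O, DD T (((P (τ+1)).2.1 j).1) (((P (τ+1)).2.2).1)) + 2)
          ≤ Λ * (∑ j ∈ O, DD T (((P τ).2.1 j).1) (((P τ).2.2).1)) :=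
        Nat.mul_le_mul_left Λ hAsum
      rw [Nat.mul_add] at hMul
      omega

  -- conclude
  have hfin : ∀ τ, Ξ τ + τ ≤ Ξ 0 := by
    intro τ
    induction τ with
    | zero => omega
    | succ τ ih =>
      have := hdec τ
      omega
  have := hfin (Ξ 0 + 1)
  omega

end Upper2
/-- Fix `k ≥ 2`, let `T₁, …, T_{2k-1}` be trees each with at least two
vertices, let `G = T₁ □ T₂ □ ⋯ □ T_{2k-1}`, and let `t ≥ 2k`.  Then the fully
active cop number of the `t`-blowup `G^{(t)}` is strictly greater than
`2k - 1`, and hence equals `2k`. -/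
theorem acop_blowup_boxProd_trees (k t : ℕ) (hk : 2 ≤ k) (ht : 2 * k ≤ t)
    {W : Fin (2 * k - 1) → Type u} [∀ i, Fintype (W i)] [∀ i, Nontrivial (W i)]
    (T : ∀ i, SimpleGraph (W i))
    (hconn : ∀ i, (T i).Connected) (hacyclic : ∀ i, (T i).IsAcyclic) :
    2 * k - 1 < acop (blowup (piBox T) t) ∧ acop (blowup (piBox T) t) = 2 * k := by
  have hwin : ActiveCopsWin (blowup (piBox T) t) (2*k) :=
    upper_win T hconn hacyclic hk (by omega)
  have hno : ∀ n, n ≤ 2*k-1 → ¬ ActiveCopsWin (blowup (piBox T) t) n :=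
    fun n hn => lower_no_win T hconn hacyclic hk hn (by omega)
  have heq : acop (blowup (piBox T) t) = 2*k := by
    unfold acop
    apply le_antisymm
    · exact Nat.sInf_le (show 2*k ∈ {n | ActiveCopsWin (blowup (piBox T) t) n} from hwin)
    · refine le_csInf ⟨2*k, hwin⟩ ?_
      intro m hm
      by_contra hlt
      push_neg at hlt
      exact hno m (by omega) hm
  exact ⟨by omega, heq⟩
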